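/- Let X be a real Banach space and let {0} = X_0 ⊊ X_1 ⊊ X_2 ⊊ ⋯ ⊊ X_n ⊊ X_{n+1} ⊆ X be a finite chain of closed linear subspaces of X, and let ε_0 > ε_1 > ⋯ > ε_n > 0 be strictly decreasing positive reals. Then there exists x ∈ X_{n+1} such that E(x, X_k) = ε_k for every 0 ≤ k ≤ n. -/

import Mathlib

open Metric

/-- helper: `b ≤ infDist x s` from pointwise bounds. -/
lemma my_le_infDist {X : Type*} [MetricSpace X] {s : Set X} {x : X} {b : ℝ}
    (hs : s.Nonempty) (h : ∀ y ∈ s, b ≤ dist x y) : b ≤ infDist x s := by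
  by_contra hlt
  push_neg at hlt
  obtain ⟨y, hy, hdy⟩ := (infDist_lt_iff hs).1 hlt
  exact absurd (h y hy) (not_le.2 hdy)

/-- translation by a member of a submodule does not change `infDist`. -/
lemma infDist_add_mem {X : Type*} [NormedAddCommGroup X] [NormedSpace ℝ X]
    (p : Submodule ℝ X) (z u : X) (hu : u ∈ p) :
    infDist (z + u) (p : Set X) = infDist z (p : Set X) := by
  have half : ∀ (y w : X), w ∈ p → infDist (y + w) (p : Set X) ≤ infDist y (p : Set X) := by
    intro y w hw
    apply my_le_infDist ⟨0, p.zero_mem⟩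
    intro a ha
    calc infDist (y + w) (p : Set X) ≤ dist (y + w) (a + w) :=
          infDist_le_dist_of_mem (p.add_mem ha hw)
      _ = dist y a := dist_add_right y a w
  refine le_antisymm (half z u hu) ?_
  have := half (z + u) (-u) (p.neg_mem hu)
  simpa using this

theorem stmt18 {X : Type*} [NormedAddCommGroup X] [NormedSpace ℝ X] [CompleteSpace X]
    (n : ℕ) (Y : ℕ → Submodule ℝ X) (h0 : Y 0 = ⊥)
    (hclosed : ∀ k, k ≤ n + 1 → IsClosed (Y k : Set X))
    (hlt : ∀ k, k ≤ n → Y k < Y (k + 1))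
    (ε : ℕ → ℝ) (hlast : 0 < ε n)
    (hdec : ∀ k, k < n → ε (k + 1) < ε k) :
    ∃ x ∈ Y (n + 1), ∀ k, k ≤ n → infDist x (Y k) = ε k := by
  -- ε is antitone on [0, n]
  have anti : ∀ d k, k + d ≤ n → ε (k + d) ≤ ε k := by
    intro d
    induction d with
    | zero => intro k _; simp
    | succ d ih =>
      intro k h
      have h1 : ε (k + d + 1) ≤ ε (k + d) := (hdec (k + d) (by omega)).le
      have h2 : ε (k + d) ≤ ε k := ih k (by omega)
      calc ε (k + (d + 1)) = ε (k + d + 1) := by ring_nf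
        _ ≤ ε (k + d) := h1
        _ ≤ ε k := h2
  have hmono : ∀ k, k ≤ n → ε n ≤ ε k := by
    intro k hk
    have : ε (k + (n - k)) ≤ ε k := anti (n - k) k (by omega)
    simpa [Nat.add_sub_cancel' hk] using this
  have epos : ∀ k, k ≤ n → 0 < ε k := fun k hk => lt_of_lt_of_le hlast (hmono k hk)
  -- strict slack function
  set εp : ℕ → ℝ := fun m => if m = 0 then ε 0 + 1 else ε (m - 1) with hεp
  -- main inductive construction
  have aux : ∀ m, m ≤ n + 1 → ∀ z : X, infDist z (Y m) < εp m →
      ∃ u ∈ Y m, ∀ k, k < m → infDist (z + u) (Y k) = ε k := by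
    intro m
    induction m with
    | zero =>
      intro _ z _
      exact ⟨0, (Y 0).zero_mem, fun k hk => absurd hk (Nat.not_lt_zero k)⟩
    | succ m ih =>
      intro hm1 z hz
      have hmn : m ≤ n := by omega
      have hεm : 0 < ε m := epos m hmn
      have hzm : infDist z (Y (m + 1)) < ε m := by
        simpa [hεp] using hz
      -- a near-best approximation in Y (m+1)
      obtain ⟨a, ha, hda⟩ : ∃ a ∈ (Y (m + 1) : Set X), dist z a < ε m :=
        (infDist_lt_iff ⟨0, (Y (m + 1)).zero_mem⟩).1 hzm
      -- a vector in Y (m+1) \ Y m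
      obtain ⟨v, hvY, hvnot⟩ := SetLike.exists_of_lt (hlt m hmn)
      have hclm : IsClosed (Y m : Set X) := hclosed m (by omega)
      have hvnot' : v ∉ (Y m : Set X) := hvnot
      have hd : 0 < infDist v (Y m) :=
        (hclm.notMem_iff_infDist_pos ⟨0, (Y m).zero_mem⟩).1 hvnot'
      set d : ℝ := infDist v (Y m) with hdd
      set T : ℝ := (ε m + ‖z‖) / d + 1 with hTdef
      have hT : 0 < T := by positivity
      -- the path
      set γ : ℝ → X := fun t => (1 - t) • (-a) + t • (T • v) with hγ
      have hγmem : ∀ t, γ t ∈ Y (m + 1) := by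
        intro t
        exact (Y (m + 1)).add_mem ((Y (m + 1)).smul_mem _ ((Y (m + 1)).neg_mem ha))
          ((Y (m + 1)).smul_mem _ ((Y (m + 1)).smul_mem _ hvY))
      set f : ℝ → ℝ := fun t => infDist (z + γ t) (Y m) with hf
      have hf0 : f 0 < ε m := by
        have h1 : f 0 = infDist (z + -a) (Y m) := by simp [hf, hγ]
        have h2 : infDist (z + -a) (Y m) ≤ dist (z + -a) 0 :=
          infDist_le_dist_of_mem (Y m).zero_mem
        have h3 : dist (z + -a) 0 = dist z a := by
          simp [dist_eq_norm, sub_eq_add_neg]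
        rw [h1]
        calc infDist (z + -a) (Y m) ≤ dist z a := by rw [← h3]; exact h2
          _ < ε m := hda
      have hf1 : ε m ≤ f 1 := by
        have h1 : f 1 = infDist (z + T • v) (Y m) := by simp [hf, hγ]
        rw [h1]
        apply my_le_infDist ⟨0, (Y m).zero_mem⟩
        intro b hb
        have hb' : T⁻¹ • b ∈ Y m := (Y m).smul_mem _ hb
        have hdb : d ≤ ‖v - T⁻¹ • b‖ := by
          have := infDist_le_dist_of_mem (x := v) hb'
          simpa [dist_eq_norm] using this
        have hsmul : T • v - b = T • (v - T⁻¹ • b) := by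
          rw [smul_sub, smul_inv_smul₀ (ne_of_gt hT)]
        have hTb : T * d ≤ ‖T • v - b‖ := by
          rw [hsmul, norm_smul, Real.norm_eq_abs, abs_of_pos hT]
          exact mul_le_mul_of_nonneg_left hdb hT.le
        have htri : ‖T • v - b‖ ≤ ‖z + T • v - b‖ + ‖z‖ := by
          have heq : T • v - b = (z + T • v - b) - z := by abel
          rw [heq]
          exact norm_sub_le _ _
        have hTd : T * d = ε m + ‖z‖ + d := by
          rw [hTdef, add_mul, div_mul_cancel₀ _ (ne_of_gt hd), one_mul]
        rw [dist_eq_norm]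
        linarith
      have hfc : Continuous f := by
        apply Continuous.comp (continuous_infDist_pt _)
        fun_prop
      -- IVT
      have hIVT := intermediate_value_Icc (zero_le_one) hfc.continuousOn
      have hmem : ε m ∈ Set.Icc (f 0) (f 1) := ⟨hf0.le, hf1⟩
      obtain ⟨t, _, hft⟩ := hIVT hmem
      set w : X := γ t with hw
      have hwmem : w ∈ Y (m + 1) := hγmem t
      have hz' : infDist (z + w) (Y m) = ε m := hft
      -- apply induction hypothesis
      have hz'lt : infDist (z + w) (Y m) < εp m := by
        rw [hz', hεp]
        rcases Nat.eq_zero_or_pos m with h | h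
        · simp [h]
        · have hm0 : m ≠ 0 := Nat.pos_iff_ne_zero.1 h
          simp only [hm0, if_false]
          have h2 : m - 1 + 1 = m := by omega
          have h3 := hdec (m - 1) (by omega)
          rw [h2] at h3
          exact h3
      obtain ⟨u', hu'mem, hu'⟩ := ih (by omega) (z + w) hz'lt
      refine ⟨w + u', (Y (m + 1)).add_mem hwmem ((hlt m hmn).le hu'mem), ?_⟩
      intro k hk
      have heq : z + (w + u') = z + w + u' := by abel
      rcases Nat.lt_succ_iff_lt_or_eq.1 hk with h | h
      · rw [heq]
        exact hu' k h
      · subst h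
        rw [heq, infDist_add_mem (Y k) (z + w) u' hu'mem, hz']
  -- conclude with z = 0
  have h0dist : infDist (0 : X) (Y (n + 1)) < εp (n + 1) := by
    rw [infDist_zero_of_mem (Y (n + 1)).zero_mem, hεp]
    simp [hlast]
  obtain ⟨u, humem, hu⟩ := aux (n + 1) le_rfl 0 h0dist
  refine ⟨u, humem, fun k hk => ?_⟩
  have := hu k (Nat.lt_succ_of_le hk)
  simpa using this
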